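/- Let n, N ≥ 1, c₀ > 0 and ε₁ > 0. Let Ψ : ℝⁿ → ℝ^N be twice continuously differentiable with ‖D²Ψ(z)‖ ≤ c₀ for all z ∈ ℝⁿ, and suppose that |DΨ(0)(h)| ≥ 2ε₁ |h| for all h ∈ ℝⁿ. Then for all a, a′ in the closed ball of radius ε₁/(2c₀) centered at 0 in ℝⁿ, one has |Ψ(a) − Ψ(a′)| ≥ ε₁ |a − a′|. -/

import Mathlib

/-- Quantitative local lower-Lipschitz bound: a `C²` map whose second derivative is
globally bounded by `c₀` and whose derivative at `0` satisfies `|DΨ(0)h| ≥ 2ε₁|h|`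
is lower-Lipschitz with constant `ε₁` on the closed ball of radius `ε₁/(2c₀)`. -/
theorem lower_lipschitz_of_injective_derivative
    (n N : ℕ) (c₀ ε₁ : ℝ) (hc₀ : 0 < c₀) (hε₁ : 0 < ε₁)
    (Ψ : EuclideanSpace ℝ (Fin n) → EuclideanSpace ℝ (Fin N))
    (hC2 : ContDiff ℝ 2 Ψ)
    (hD2 : ∀ z, ‖iteratedFDeriv ℝ 2 Ψ z‖ ≤ c₀)
    (hlow : ∀ h : EuclideanSpace ℝ (Fin n), 2 * ε₁ * ‖h‖ ≤ ‖fderiv ℝ Ψ 0 h‖) :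
    ∀ a ∈ Metric.closedBall (0 : EuclideanSpace ℝ (Fin n)) (ε₁ / (2 * c₀)),
      ∀ a' ∈ Metric.closedBall (0 : EuclideanSpace ℝ (Fin n)) (ε₁ / (2 * c₀)),
        ε₁ * ‖a - a'‖ ≤ ‖Ψ a - Ψ a'‖ := by
  intro a ha a' ha'
  set s := Metric.closedBall (0 : EuclideanSpace ℝ (Fin n)) (ε₁ / (2 * c₀)) with hs
  have hdiff : Differentiable ℝ Ψ := hC2.differentiable (by norm_num)
  have hdiff' : Differentiable ℝ (fderiv ℝ Ψ) :=
    (hC2.fderiv_right (m := 1) (by norm_num)).differentiable one_ne_zero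
  -- the derivative of fderiv Ψ is bounded by c₀
  have hbd : ∀ z, ‖fderiv ℝ (fderiv ℝ Ψ) z‖ ≤ c₀ := by
    intro z
    have h1 : ‖iteratedFDeriv ℝ 0 (fderiv ℝ (fderiv ℝ Ψ)) z‖
        = ‖iteratedFDeriv ℝ 1 (fderiv ℝ Ψ) z‖ := norm_iteratedFDeriv_fderiv
    have h2 : ‖iteratedFDeriv ℝ 1 (fderiv ℝ Ψ) z‖ = ‖iteratedFDeriv ℝ 2 Ψ z‖ :=
      norm_iteratedFDeriv_fderiv
    rw [norm_iteratedFDeriv_zero] at h1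
    rw [h1, h2]; exact hD2 z
  -- hence fderiv Ψ is close to fderiv Ψ 0 on the ball
  have hlip : LipschitzWith ⟨c₀, hc₀.le⟩ (fderiv ℝ Ψ) :=
    lipschitzWith_of_nnnorm_fderiv_le hdiff' (fun x => by
      exact NNReal.coe_le_coe.mp (hbd x))
  have hclose : ∀ x ∈ s, ‖fderiv ℝ Ψ x - fderiv ℝ Ψ 0‖ ≤ ε₁ / 2 := by
    intro x hx
    have := hlip.dist_le_mul x 0
    rw [dist_eq_norm] at this
    have hxle : ‖x‖ ≤ ε₁ / (2 * c₀) := by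
      simpa [hs, dist_eq_norm] using hx
    calc ‖fderiv ℝ Ψ x - fderiv ℝ Ψ 0‖ ≤ c₀ * dist x 0 := this
      _ = c₀ * ‖x‖ := by rw [dist_zero_right]
      _ ≤ c₀ * (ε₁ / (2 * c₀)) := by nlinarith [norm_nonneg x]
      _ = ε₁ / 2 := by field_simp
  -- mean value inequality
  have hkey : ‖Ψ a - Ψ a' - fderiv ℝ Ψ 0 (a - a')‖ ≤ (ε₁ / 2) * ‖a - a'‖ :=
    (convex_closedBall _ _).norm_image_sub_le_of_norm_fderiv_le'
      (fun x _ => hdiff x) hclose ha' ha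
  have hlb := hlow (a - a')
  have htri : ‖fderiv ℝ Ψ 0 (a - a')‖ - ‖Ψ a - Ψ a'‖ ≤ ‖Ψ a - Ψ a' - fderiv ℝ Ψ 0 (a - a')‖ := by
    have := norm_sub_norm_le (fderiv ℝ Ψ 0 (a - a')) (Ψ a - Ψ a')
    have h := norm_sub_rev (Ψ a - Ψ a') (fderiv ℝ Ψ 0 (a - a'))
    linarith [norm_sub_norm_le (fderiv ℝ Ψ 0 (a - a')) (Ψ a - Ψ a'), h.ge]
  nlinarith [norm_nonneg (a - a')]
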